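/- arXiv:2410.23225 — 2 statements merged into one kernel-verified Lean document; each statement's English description precedes it below -/
import Mathlib

section
/- Let μ be the Gibbs distribution of a permissive spin system (G,q,A_E,A_V) and suppose μ satisfies C-coupling independence for some C > 0. Let R > 0 be an integer. Then for every Λ ⊆ V and all partial configurations σ,τ : Λ → [q] that differ only at a vertex v ∈ Λ, there exists a coupling 𝒞 of μ^σ and μ^τ such that E_{(σ',τ')∼𝒞}[ Σ_{u ∈ S_R(v)} 1[σ'(u) ≠ τ'(u)] ] ≤ 2C·(1/2)^{⌈R/(2C)⌉}. -/
open scoped Classical BigOperators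

noncomputable section

namespace SpinFormal

variable {V : Type} [Fintype V] [DecidableEq V] {q : ℕ}

/-- `μ` is a probability distribution on the finite type `Ω`. -/
def IsDist {Ω : Type} [Fintype Ω] (μ : Ω → ℝ) : Prop :=
  (∀ x, 0 ≤ μ x) ∧ ∑ x, μ x = 1

/-- `π` is a coupling of `μ` and `ν`. -/
def IsCoupling {Ω₁ Ω₂ : Type} [Fintype Ω₁] [Fintype Ω₂]
    (π : Ω₁ × Ω₂ → ℝ) (μ : Ω₁ → ℝ) (ν : Ω₂ → ℝ) : Prop :=
  (∀ p, 0 ≤ π p) ∧ (∀ x, ∑ y, π (x, y) = μ x) ∧ (∀ y, ∑ x, π (x, y) = ν y)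

/-- 1-Wasserstein distance with respect to a cost `d`. -/
def Wass {Ω₁ Ω₂ : Type} [Fintype Ω₁] [Fintype Ω₂] (d : Ω₁ → Ω₂ → ℝ)
    (μ : Ω₁ → ℝ) (ν : Ω₂ → ℝ) : ℝ :=
  sInf {c : ℝ | ∃ π : Ω₁ × Ω₂ → ℝ, IsCoupling π μ ν ∧ ∑ p : Ω₁ × Ω₂, π p * d p.1 p.2 = c}

/-- Hamming distance between two configurations, as a real number. -/
def hamming {W : Type} [Fintype W] {α : Type} [DecidableEq α] (σ τ : W → α) : ℝ :=
  ((Finset.univ.filter fun w => σ w ≠ τ w).card : ℝ)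

/-- Total variation distance between two functions on a finite type. -/
def tvDist {X : Type} [Fintype X] (μ ν : X → ℝ) : ℝ := (∑ x, |μ x - ν x|) / 2

/-- The symmetrised edge interaction, as a function on unordered pairs.
When `AE` is symmetric this is just `AE (τ u) (τ v)` on the edge `{u,v}`. -/
def edgeFactor (AE : Fin q → Fin q → ℝ) (τ : V → Fin q) : Sym2 V → ℝ :=
  Sym2.lift ⟨fun u v => (AE (τ u) (τ v) + AE (τ v) (τ u)) / 2, fun u v => by simp [add_comm]⟩

/-- The conditional weight `w^σ(τ)` for the pinning `σ` on `Λ`: products range over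
vertices outside `Λ` and edges with at least one endpoint outside `Λ`. -/
def condWeight (G : SimpleGraph V) (AE : Fin q → Fin q → ℝ) (AV : Fin q → ℝ)
    (Λ : Finset V) (σ τ : V → Fin q) : ℝ :=
  (if ∀ v ∈ Λ, τ v = σ v then (1 : ℝ) else 0)
    * (∏ v ∈ Λᶜ, AV (τ v))
    * ∏ e ∈ Finset.univ.filter
        (fun e : Sym2 V => e ∈ G.edgeSet ∧ ¬ ∀ v ∈ e, v ∈ Λ), edgeFactor AE τ e

/-- The conditional partition function `Z^σ`. -/
def condZ (G : SimpleGraph V) (AE : Fin q → Fin q → ℝ) (AV : Fin q → ℝ)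
    (Λ : Finset V) (σ : V → Fin q) : ℝ :=
  ∑ τ : V → Fin q, condWeight G AE AV Λ σ τ

/-- The conditional Gibbs distribution `μ^σ`. -/
def condDist (G : SimpleGraph V) (AE : Fin q → Fin q → ℝ) (AV : Fin q → ℝ)
    (Λ : Finset V) (σ : V → Fin q) : (V → Fin q) → ℝ :=
  fun τ => condWeight G AE AV Λ σ τ / condZ G AE AV Λ σ

/-- A spin system is permissive if every conditional partition function is positive. -/
def Permissive (G : SimpleGraph V) (AE : Fin q → Fin q → ℝ) (AV : Fin q → ℝ) : Prop :=
  ∀ (Λ : Finset V) (σ : V → Fin q), 0 < condZ G AE AV Λ σ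

/-- Marginal of a distribution on configurations at a single vertex. -/
def marginalAt (μ : (V → Fin q) → ℝ) (u : V) (c : Fin q) : ℝ :=
  ∑ τ : V → Fin q, if τ u = c then μ τ else 0

/-- Marginal probability of a partial configuration `σ` on `Λ`. -/
def margOn (μ : (V → Fin q) → ℝ) (Λ : Finset V) (σ : V → Fin q) : ℝ :=
  ∑ τ : V → Fin q, if ∀ v ∈ Λ, τ v = σ v then μ τ else 0

/-- Two partial configurations on `Λ` differ exactly at the vertex `v ∈ Λ`. -/
def DifferOnlyAt (Λ : Finset V) (σ τ : V → Fin q) (v : V) : Prop :=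
  v ∈ Λ ∧ σ v ≠ τ v ∧ ∀ u ∈ Λ, u ≠ v → σ u = τ u

/-- `C`-coupling independence of the Gibbs distribution of a spin system. -/
def CouplingIndependence (G : SimpleGraph V) (AE : Fin q → Fin q → ℝ)
    (AV : Fin q → ℝ) (C : ℝ) : Prop :=
  ∀ (Λ : Finset V) (σ τ : V → Fin q) (v : V), DifferOnlyAt Λ σ τ v →
    Wass hamming (condDist G AE AV Λ σ) (condDist G AE AV Λ τ) ≤ C

/-- The sphere of radius `ℓ` around `v` in `G` (w.r.t. graph distance). -/
def sphere (G : SimpleGraph V) (v : V) (ℓ : ℕ) : Finset V :=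
  Finset.univ.filter fun u => G.Reachable v u ∧ G.dist v u = ℓ

end SpinFormal

open SpinFormal

set_option linter.unusedSectionVars false
set_option linter.unusedVariables false

namespace SpinProof

variable {V : Type} [Fintype V] [DecidableEq V] {q : ℕ}

section Basic

variable {G : SimpleGraph V} {AE : Fin q → Fin q → ℝ} {AV : Fin q → ℝ}

lemma edgeFactor_nonneg (hAEnn : ∀ i j, 0 ≤ AE i j) (τ : V → Fin q) (e : Sym2 V) :
    0 ≤ edgeFactor AE τ e := by
  induction e using Sym2.ind with
  | _ u w =>
    show 0 ≤ (AE (τ u) (τ w) + AE (τ w) (τ u)) / 2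
    have h1 := hAEnn (τ u) (τ w); have h2 := hAEnn (τ w) (τ u); linarith

lemma condWeight_nonneg (hAEnn : ∀ i j, 0 ≤ AE i j) (hAVnn : ∀ i, 0 ≤ AV i)
    (Λ : Finset V) (σ τ : V → Fin q) : 0 ≤ condWeight G AE AV Λ σ τ := by
  unfold condWeight
  refine mul_nonneg (mul_nonneg ?_ ?_) ?_
  · split <;> norm_num
  · exact Finset.prod_nonneg fun _ _ => hAVnn _
  · exact Finset.prod_nonneg fun e _ => edgeFactor_nonneg hAEnn τ e

lemma condWeight_eq_zero_of_disagree {Λ : Finset V} {σ τ : V → Fin q}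
    (h : ¬ ∀ v ∈ Λ, τ v = σ v) : condWeight G AE AV Λ σ τ = 0 := by
  unfold condWeight; rw [if_neg h]; ring

/-- The conditional weight only depends on the pinning through its values on `Λ`. -/
lemma condWeight_pin_congr {Λ : Finset V} {σ σ' : V → Fin q}
    (h : ∀ u ∈ Λ, σ u = σ' u) (τ : V → Fin q) :
    condWeight G AE AV Λ σ τ = condWeight G AE AV Λ σ' τ := by
  unfold condWeight
  congr 2
  have : (∀ v ∈ Λ, τ v = σ v) ↔ (∀ v ∈ Λ, τ v = σ' v) := by
    constructor <;> intro hh u hu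
    · rw [hh u hu, h u hu]
    · rw [hh u hu, ← h u hu]
  simp only [this]

lemma condZ_pin_congr {Λ : Finset V} {σ σ' : V → Fin q}
    (h : ∀ u ∈ Λ, σ u = σ' u) : condZ G AE AV Λ σ = condZ G AE AV Λ σ' :=
  Finset.sum_congr rfl fun τ _ => condWeight_pin_congr h τ

lemma condDist_pin_congr {Λ : Finset V} {σ σ' : V → Fin q}
    (h : ∀ u ∈ Λ, σ u = σ' u) : condDist G AE AV Λ σ = condDist G AE AV Λ σ' := by
  funext τ
  unfold condDist
  rw [condWeight_pin_congr h, condZ_pin_congr h]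

lemma condDist_nonneg (hAEnn : ∀ i j, 0 ≤ AE i j) (hAVnn : ∀ i, 0 ≤ AV i)
    (hperm : Permissive G AE AV) (Λ : Finset V) (σ : V → Fin q) (τ : V → Fin q) :
    0 ≤ condDist G AE AV Λ σ τ :=
  div_nonneg (condWeight_nonneg hAEnn hAVnn Λ σ τ) (hperm Λ σ).le

lemma condDist_isDist (hAEnn : ∀ i j, 0 ≤ AE i j) (hAVnn : ∀ i, 0 ≤ AV i)
    (hperm : Permissive G AE AV) (Λ : Finset V) (σ : V → Fin q) :
    IsDist (condDist G AE AV Λ σ) := by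
  refine ⟨condDist_nonneg hAEnn hAVnn hperm Λ σ, ?_⟩
  unfold condDist
  rw [← Finset.sum_div]
  exact div_self (hperm Λ σ).ne'

lemma condDist_agree (hperm : Permissive G AE AV) {Λ : Finset V} {σ : V → Fin q}
    {x : V → Fin q} (h : condDist G AE AV Λ σ x ≠ 0) : ∀ u ∈ Λ, x u = σ u := by
  by_contra hh
  exact h (by unfold condDist; rw [condWeight_eq_zero_of_disagree hh, zero_div])

end Basic

section Couplings

variable {Ω₁ Ω₂ Ω₃ : Type} [Fintype Ω₁] [Fintype Ω₂] [Fintype Ω₃]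

lemma prod_isCoupling {μ : Ω₁ → ℝ} {ν : Ω₂ → ℝ} (hμ : IsDist μ) (hν : IsDist ν) :
    IsCoupling (fun p : Ω₁ × Ω₂ => μ p.1 * ν p.2) μ ν := by
  refine ⟨fun p => mul_nonneg (hμ.1 _) (hν.1 _), fun x => ?_, fun y => ?_⟩
  · dsimp only; rw [← Finset.mul_sum, hν.2, mul_one]
  · dsimp only; rw [← Finset.sum_mul, hμ.2, one_mul]

lemma coupling_sum_one {π : Ω₁ × Ω₂ → ℝ} {μ : Ω₁ → ℝ} {ν : Ω₂ → ℝ}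
    (hπ : IsCoupling π μ ν) (hμ : IsDist μ) : ∑ p : Ω₁ × Ω₂, π p = 1 := by
  rw [Fintype.sum_prod_type]
  simp only [hπ.2.1]
  exact hμ.2

lemma coupling_fst_pos {π : Ω₁ × Ω₂ → ℝ} {μ : Ω₁ → ℝ} {ν : Ω₂ → ℝ}
    (hπ : IsCoupling π μ ν) {x : Ω₁} {y : Ω₂} (h : π (x, y) ≠ 0) : μ x ≠ 0 := by
  have h0 : 0 < π (x, y) := lt_of_le_of_ne (hπ.1 _) (Ne.symm h)
  have : π (x, y) ≤ μ x := by
    rw [← hπ.2.1 x]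
    exact Finset.single_le_sum (fun i _ => hπ.1 (x, i)) (Finset.mem_univ y)
  exact (lt_of_lt_of_le h0 this).ne'

lemma coupling_snd_pos {π : Ω₁ × Ω₂ → ℝ} {μ : Ω₁ → ℝ} {ν : Ω₂ → ℝ}
    (hπ : IsCoupling π μ ν) {x : Ω₁} {y : Ω₂} (h : π (x, y) ≠ 0) : ν y ≠ 0 := by
  have h0 : 0 < π (x, y) := lt_of_le_of_ne (hπ.1 _) (Ne.symm h)
  have : π (x, y) ≤ ν y := by
    rw [← hπ.2.2 y]
    exact Finset.single_le_sum (fun i _ => hπ.1 (i, y)) (Finset.mem_univ x)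
  exact (lt_of_lt_of_le h0 this).ne'

lemma exists_coupling_cost_lt {d : Ω₁ → Ω₂ → ℝ} {μ : Ω₁ → ℝ} {ν : Ω₂ → ℝ} {C δ : ℝ}
    (hμ : IsDist μ) (hν : IsDist ν) (hW : Wass d μ ν ≤ C) (hδ : 0 < δ) :
    ∃ π : Ω₁ × Ω₂ → ℝ, IsCoupling π μ ν ∧ ∑ p : Ω₁ × Ω₂, π p * d p.1 p.2 < C + δ := by
  have hne : {c : ℝ | ∃ π : Ω₁ × Ω₂ → ℝ, IsCoupling π μ ν ∧
      ∑ p : Ω₁ × Ω₂, π p * d p.1 p.2 = c}.Nonempty :=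
    ⟨_, fun p : Ω₁ × Ω₂ => μ p.1 * ν p.2, prod_isCoupling hμ hν, rfl⟩
  have hlt : Wass d μ ν < C + δ := lt_of_le_of_lt hW (by linarith)
  obtain ⟨c, ⟨π, hπ, hc⟩, hcl⟩ := exists_lt_of_csInf_lt hne hlt
  exact ⟨π, hπ, hc ▸ hcl⟩

lemma wass_ge_of_forall {d : Ω₁ → Ω₂ → ℝ} {μ : Ω₁ → ℝ} {ν : Ω₂ → ℝ} {b : ℝ}
    (hμ : IsDist μ) (hν : IsDist ν)
    (h : ∀ π : Ω₁ × Ω₂ → ℝ, IsCoupling π μ ν → b ≤ ∑ p : Ω₁ × Ω₂, π p * d p.1 p.2) :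
    b ≤ Wass d μ ν := by
  have hne : {c : ℝ | ∃ π : Ω₁ × Ω₂ → ℝ, IsCoupling π μ ν ∧
      ∑ p : Ω₁ × Ω₂, π p * d p.1 p.2 = c}.Nonempty :=
    ⟨_, fun p : Ω₁ × Ω₂ => μ p.1 * ν p.2, prod_isCoupling hμ hν, rfl⟩
  exact le_csInf hne (by rintro c ⟨π, hπ, rfl⟩; exact h π hπ)

end Couplings

section Cost

variable {V : Type} [Fintype V] [DecidableEq V] {q : ℕ}

/-- Expected number of disagreements inside `S` under a coupling `π`. -/
def costOn (S : Finset V) (π : ((V → Fin q) × (V → Fin q)) → ℝ) : ℝ :=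
  ∑ p : (V → Fin q) × (V → Fin q), π p * ((S.filter fun u => p.1 u ≠ p.2 u).card : ℝ)

lemma costOn_nonneg {S : Finset V} {π : ((V → Fin q) × (V → Fin q)) → ℝ}
    (hπ : ∀ p, 0 ≤ π p) : 0 ≤ costOn S π :=
  Finset.sum_nonneg fun p _ => mul_nonneg (hπ p) (by positivity)

lemma costOn_mono {S T : Finset V} {π : ((V → Fin q) × (V → Fin q)) → ℝ}
    (hπ : ∀ p, 0 ≤ π p) (hST : S ⊆ T) : costOn S π ≤ costOn T π := by
  refine Finset.sum_le_sum fun p _ => mul_le_mul_of_nonneg_left ?_ (hπ p)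
  exact_mod_cast Finset.card_le_card (Finset.filter_subset_filter _ hST)

lemma card_filter_triangle (S : Finset V) (x y z : V → Fin q) :
    ((S.filter fun u => x u ≠ z u).card : ℝ)
      ≤ ((S.filter fun u => x u ≠ y u).card : ℝ)
        + ((S.filter fun u => y u ≠ z u).card : ℝ) := by
  have hsub : (S.filter fun u => x u ≠ z u)
      ⊆ (S.filter fun u => x u ≠ y u) ∪ (S.filter fun u => y u ≠ z u) := by
    intro u hu
    simp only [Finset.mem_filter, Finset.mem_union] at *
    rcases hu with ⟨hS, hxz⟩
    by_cases h : x u = y u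
    · exact Or.inr ⟨hS, fun hyz => hxz (h.trans hyz)⟩
    · exact Or.inl ⟨hS, h⟩
  exact_mod_cast (Finset.card_le_card hsub).trans (Finset.card_union_le _ _)

/-- Gluing two couplings along a common middle distribution. -/
lemma glue {π₁ π₂ : ((V → Fin q) × (V → Fin q)) → ℝ} {μ ν ξ : (V → Fin q) → ℝ}
    (hπ₁ : IsCoupling π₁ μ ν) (hπ₂ : IsCoupling π₂ ν ξ) :
    ∃ π₃ : ((V → Fin q) × (V → Fin q)) → ℝ, IsCoupling π₃ μ ξ ∧
      ∀ S : Finset V, costOn S π₃ ≤ costOn S π₁ + costOn S π₂ := by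
  classical
  set t : (V → Fin q) → (V → Fin q) → (V → Fin q) → ℝ :=
    fun x y z => if ν y = 0 then 0 else π₁ (x, y) * π₂ (y, z) / ν y with ht
  have hν0 : ∀ y, 0 ≤ ν y := fun y => by
    rw [← hπ₁.2.2 y]; exact Finset.sum_nonneg fun _ _ => hπ₁.1 _
  have hπ₁le : ∀ x y, π₁ (x, y) ≤ ν y := fun x y => by
    rw [← hπ₁.2.2 y]
    exact Finset.single_le_sum (fun i _ => hπ₁.1 (i, y)) (Finset.mem_univ x)
  have hπ₁z : ∀ x y, ν y = 0 → π₁ (x, y) = 0 := fun x y h =>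
    le_antisymm (h ▸ hπ₁le x y) (hπ₁.1 _)
  have hπ₂z : ∀ y z, ν y = 0 → π₂ (y, z) = 0 := fun y z h => by
    have hle : π₂ (y, z) ≤ ν y := by
      rw [← hπ₂.2.1 y]
      exact Finset.single_le_sum (fun i _ => hπ₂.1 (y, i)) (Finset.mem_univ z)
    exact le_antisymm (h ▸ hle) (hπ₂.1 _)
  have ht0 : ∀ x y z, 0 ≤ t x y z := by
    intro x y z
    simp only [ht]
    split
    · exact le_refl 0
    · exact div_nonneg (mul_nonneg (hπ₁.1 _) (hπ₂.1 _)) (hν0 y)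
  have hsum_z : ∀ x y, ∑ z, t x y z = π₁ (x, y) := by
    intro x y
    by_cases h : ν y = 0
    · simp only [ht, if_pos h, Finset.sum_const_zero]
      exact (hπ₁z x y h).symm
    · simp only [ht, if_neg h]
      rw [← Finset.sum_div, ← Finset.mul_sum, hπ₂.2.1, mul_div_assoc, div_self h, mul_one]
  have hsum_x : ∀ y z, ∑ x, t x y z = π₂ (y, z) := by
    intro y z
    by_cases h : ν y = 0
    · simp only [ht, if_pos h, Finset.sum_const_zero]
      exact (hπ₂z y z h).symm
    · simp only [ht, if_neg h]
      rw [← Finset.sum_div, ← Finset.sum_mul, hπ₁.2.2, mul_comm, mul_div_assoc, div_self h,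
        mul_one]
  refine ⟨fun p => ∑ y, t p.1 y p.2, ⟨?_, ?_, ?_⟩, ?_⟩
  · exact fun p => Finset.sum_nonneg fun y _ => ht0 _ _ _
  · intro x
    dsimp only
    rw [Finset.sum_comm]
    simp only [hsum_z]
    exact hπ₁.2.1 x
  · intro z
    dsimp only
    rw [Finset.sum_comm]
    simp only [hsum_x]
    exact hπ₂.2.2 z
  · intro S
    have step1 : costOn S (fun p => ∑ y, t p.1 y p.2)
        ≤ ∑ p : (V → Fin q) × (V → Fin q), ∑ y, t p.1 y p.2 *
            (((S.filter fun u => p.1 u ≠ y u).card : ℝ)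
              + ((S.filter fun u => y u ≠ p.2 u).card : ℝ)) := by
      unfold costOn
      refine Finset.sum_le_sum fun p _ => ?_
      dsimp only
      rw [Finset.sum_mul]
      exact Finset.sum_le_sum fun y _ =>
        mul_le_mul_of_nonneg_left (card_filter_triangle S p.1 y p.2) (ht0 _ _ _)
    refine step1.trans (le_of_eq ?_)
    have expand : ∑ p : (V → Fin q) × (V → Fin q), ∑ y, t p.1 y p.2 *
            (((S.filter fun u => p.1 u ≠ y u).card : ℝ)
              + ((S.filter fun u => y u ≠ p.2 u).card : ℝ))
        = (∑ x, ∑ z, ∑ y, t x y z * ((S.filter fun u => x u ≠ y u).card : ℝ))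
          + (∑ x, ∑ z, ∑ y, t x y z * ((S.filter fun u => y u ≠ z u).card : ℝ)) := by
      rw [Fintype.sum_prod_type, ← Finset.sum_add_distrib]
      refine Finset.sum_congr rfl fun x _ => ?_
      rw [← Finset.sum_add_distrib]
      refine Finset.sum_congr rfl fun z _ => ?_
      rw [← Finset.sum_add_distrib]
      exact Finset.sum_congr rfl fun y _ => by ring
    rw [expand]
    congr 1
    · calc ∑ x, ∑ z, ∑ y, t x y z * ((S.filter fun u => x u ≠ y u).card : ℝ)
          = ∑ x, ∑ y, ∑ z, t x y z * ((S.filter fun u => x u ≠ y u).card : ℝ) :=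
            Finset.sum_congr rfl fun x _ => Finset.sum_comm
        _ = ∑ x, ∑ y, π₁ (x, y) * ((S.filter fun u => x u ≠ y u).card : ℝ) := by
            refine Finset.sum_congr rfl fun x _ => Finset.sum_congr rfl fun y _ => ?_
            rw [← Finset.sum_mul, hsum_z]
        _ = costOn S π₁ := by unfold costOn; rw [Fintype.sum_prod_type]
    · calc ∑ x, ∑ z, ∑ y, t x y z * ((S.filter fun u => y u ≠ z u).card : ℝ)
          = ∑ z, ∑ x, ∑ y, t x y z * ((S.filter fun u => y u ≠ z u).card : ℝ) :=
            Finset.sum_comm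
        _ = ∑ z, ∑ y, ∑ x, t x y z * ((S.filter fun u => y u ≠ z u).card : ℝ) :=
            Finset.sum_congr rfl fun z _ => Finset.sum_comm
        _ = ∑ z, ∑ y, π₂ (y, z) * ((S.filter fun u => y u ≠ z u).card : ℝ) := by
            refine Finset.sum_congr rfl fun z _ => Finset.sum_congr rfl fun y _ => ?_
            rw [← Finset.sum_mul, hsum_x]
        _ = ∑ y, ∑ z, π₂ (y, z) * ((S.filter fun u => y u ≠ z u).card : ℝ) :=
            Finset.sum_comm
        _ = costOn S π₂ := by unfold costOn; rw [Fintype.sum_prod_type]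

/-- The diagonal coupling of a distribution with itself. -/
lemma diag_coupling {μ : (V → Fin q) → ℝ} (hμ : IsDist μ) :
    ∃ κ : ((V → Fin q) × (V → Fin q)) → ℝ, IsCoupling κ μ μ ∧
      ∀ S : Finset V, costOn S κ = 0 := by
  classical
  refine ⟨fun p => if p.1 = p.2 then μ p.1 else 0, ⟨?_, ?_, ?_⟩, ?_⟩
  · intro p; dsimp only; split
    · exact hμ.1 _
    · exact le_refl 0
  · intro x
    dsimp only
    simp
  · intro y
    dsimp only
    simp
  · intro S
    refine Finset.sum_eq_zero fun p _ => ?_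
    dsimp only
    by_cases h : p.1 = p.2
    · rw [if_pos h]
      have : (S.filter fun u => p.1 u ≠ p.2 u) = ∅ := by
        refine Finset.filter_eq_empty_iff.mpr fun u _ => ?_
        rw [h]; exact not_ne_iff.mpr rfl
      rw [this]; simp
    · rw [if_neg h, zero_mul]

end Cost

section Boundary

variable {V : Type} [Fintype V] [DecidableEq V] {q : ℕ}
variable {G : SimpleGraph V} {AE : Fin q → Fin q → ℝ} {AV : Fin q → ℝ}

/-- Overwrite `x` by `ρ` on `P`. -/
def overwrite (x ρ : V → Fin q) (P : Finset V) : V → Fin q :=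
  fun u => if u ∈ P then ρ u else x u

lemma overwrite_mem {x ρ : V → Fin q} {P : Finset V} {u : V} (h : u ∈ P) :
    overwrite x ρ P u = ρ u := if_pos h

lemma overwrite_not_mem {x ρ : V → Fin q} {P : Finset V} {u : V} (h : u ∉ P) :
    overwrite x ρ P u = x u := if_neg h

/-- The conditional weight is unchanged when the pinned configuration is modified away
from the boundary of `P`. -/
lemma condWeight_boundary_eq {P : Finset V} {ρ ρ' x x' : V → Fin q}
    (hbd : ∀ u ∈ P, (∃ w, w ∉ P ∧ G.Adj u w) → ρ u = ρ' u)
    (hx : ∀ u ∈ P, x u = ρ u) (hx' : ∀ u ∈ P, x' u = ρ' u)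
    (hout : ∀ u, u ∉ P → x u = x' u) :
    condWeight G AE AV P ρ x = condWeight G AE AV P ρ' x' := by
  have hxx' : ∀ u ∈ P, (∃ w, w ∉ P ∧ G.Adj u w) → x u = x' u := fun u hu hw => by
    rw [hx u hu, hx' u hu]; exact hbd u hu hw
  unfold condWeight
  rw [if_pos hx, if_pos hx']
  congr 1
  · rw [one_mul, one_mul]
    exact Finset.prod_congr rfl fun u hu => by rw [hout u (Finset.mem_compl.mp hu)]
  · refine Finset.prod_congr rfl fun e he => ?_
    rw [Finset.mem_filter] at he
    obtain ⟨-, heE, hnP⟩ := he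
    revert heE hnP
    induction e using Sym2.ind with
    | _ u w =>
      intro heE hnP
      have hadj : G.Adj u w := (G.mem_edgeSet).mp heE
      have hnotboth : ¬ (u ∈ P ∧ w ∈ P) := by
        rintro ⟨h1, h2⟩
        exact hnP fun a ha => by
          rcases Sym2.mem_iff.mp ha with h | h <;> subst h <;> assumption
      have hu : x u = x' u := by
        by_cases hP : u ∈ P
        · exact hxx' u hP ⟨w, fun hw => hnotboth ⟨hP, hw⟩, hadj⟩
        · exact hout u hP
      have hw2 : x w = x' w := by
        by_cases hP : w ∈ P
        · exact hxx' w hP ⟨u, fun hu2 => hnotboth ⟨hu2, hP⟩, hadj.symm⟩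
        · exact hout w hP
      show edgeFactor AE x s(u, w) = edgeFactor AE x' s(u, w)
      simp only [edgeFactor, Sym2.lift_mk]
      rw [hu, hw2]

lemma condZ_eq_sum_filter (P : Finset V) (ρ : V → Fin q) :
    condZ G AE AV P ρ
      = ∑ x ∈ Finset.univ.filter (fun x : V → Fin q => ∀ u ∈ P, x u = ρ u),
          condWeight G AE AV P ρ x := by
  refine (Finset.sum_subset (Finset.filter_subset _ _) fun x _ hx => ?_).symm
  refine condWeight_eq_zero_of_disagree ?_
  intro h
  exact hx (Finset.mem_filter.mpr ⟨Finset.mem_univ x, h⟩)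

lemma condZ_boundary_eq {P : Finset V} {ρ ρ' : V → Fin q}
    (hbd : ∀ u ∈ P, (∃ w, w ∉ P ∧ G.Adj u w) → ρ u = ρ' u) :
    condZ G AE AV P ρ = condZ G AE AV P ρ' := by
  rw [condZ_eq_sum_filter, condZ_eq_sum_filter]
  refine Finset.sum_nbij' (i := fun x => overwrite x ρ' P) (j := fun y => overwrite y ρ P)
    ?_ ?_ ?_ ?_ ?_
  · intro a _
    exact Finset.mem_filter.mpr ⟨Finset.mem_univ _, fun u hu => overwrite_mem hu⟩
  · intro a _
    exact Finset.mem_filter.mpr ⟨Finset.mem_univ _, fun u hu => overwrite_mem hu⟩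
  · intro a ha
    funext u
    by_cases h : u ∈ P
    · rw [overwrite_mem h]
      exact ((Finset.mem_filter.mp ha).2 u h).symm
    · rw [overwrite_not_mem h, overwrite_not_mem h]
  · intro a ha
    funext u
    by_cases h : u ∈ P
    · rw [overwrite_mem h]
      exact ((Finset.mem_filter.mp ha).2 u h).symm
    · rw [overwrite_not_mem h, overwrite_not_mem h]
  · intro a ha
    refine condWeight_boundary_eq hbd (Finset.mem_filter.mp ha).2
      (fun u hu => overwrite_mem hu) (fun u hu => (overwrite_not_mem hu).symm)

/-- Identical-outside coupling: if two pinnings on `P` agree on the boundary of `P`,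
their conditional distributions can be coupled so that the samples agree outside `P`. -/
lemma exists_identical_outside_coupling
    (hAEnn : ∀ i j, 0 ≤ AE i j) (hAVnn : ∀ i, 0 ≤ AV i) (hperm : Permissive G AE AV)
    {P : Finset V} {ρ ρ' : V → Fin q}
    (hbd : ∀ u ∈ P, (∃ w, w ∉ P ∧ G.Adj u w) → ρ u = ρ' u) :
    ∃ κ : ((V → Fin q) × (V → Fin q)) → ℝ,
      IsCoupling κ (condDist G AE AV P ρ) (condDist G AE AV P ρ') ∧
      ∀ U : Finset V, (∀ u ∈ U, u ∈ P → ρ u = ρ' u) → costOn U κ = 0 := by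
  classical
  refine ⟨fun p => if p.2 = overwrite p.1 ρ' P then condDist G AE AV P ρ p.1 else 0,
    ⟨?_, ?_, ?_⟩, ?_⟩
  · intro p; dsimp only; split
    · exact condDist_nonneg hAEnn hAVnn hperm _ _ _
    · exact le_refl 0
  · intro x
    dsimp only
    simp [Finset.sum_ite_eq']
  · intro y
    dsimp only
    by_cases hy : ∀ u ∈ P, y u = ρ' u
    · rw [Finset.sum_eq_single (overwrite y ρ P)]
      · have hcond : y = overwrite (overwrite y ρ P) ρ' P := by
          funext u
          by_cases h : u ∈ P
          · rw [overwrite_mem h]; exact hy u h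
          · rw [overwrite_not_mem h, overwrite_not_mem h]
        rw [if_pos hcond]
        unfold condDist
        rw [condZ_boundary_eq hbd,
          condWeight_boundary_eq hbd (fun u hu => overwrite_mem hu) hy
            (fun u hu => overwrite_not_mem hu)]
      · intro a _ hne
        by_cases hcond : y = overwrite a ρ' P
        · rw [if_pos hcond]
          by_contra hne0
          have ha : ∀ u ∈ P, a u = ρ u := condDist_agree hperm hne0
          refine hne ?_
          funext u
          by_cases h : u ∈ P
          · rw [overwrite_mem h]; exact ha u h
          · rw [overwrite_not_mem h]
            rw [hcond]
            exact (overwrite_not_mem h).symm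
        · exact if_neg hcond
      · intro h
        exact absurd (Finset.mem_univ _) h
    · rw [Finset.sum_eq_zero, eq_comm]
      · unfold condDist
        rw [condWeight_eq_zero_of_disagree hy, zero_div]
      · intro a _
        refine if_neg fun hcond => ?_
        refine hy fun u hu => ?_
        rw [hcond]
        exact overwrite_mem hu
  · intro U hU
    refine Finset.sum_eq_zero fun p _ => ?_
    dsimp only
    by_cases hcond : p.2 = overwrite p.1 ρ' P
    · rw [if_pos hcond]
      by_cases h0 : condDist G AE AV P ρ p.1 = 0
      · rw [h0, zero_mul]
      · have hag : ∀ u ∈ P, p.1 u = ρ u := condDist_agree hperm h0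
        have : (U.filter fun u => p.1 u ≠ p.2 u) = ∅ := by
          refine Finset.filter_eq_empty_iff.mpr fun u hu => ?_
          rw [not_ne_iff, hcond]
          by_cases h : u ∈ P
          · rw [overwrite_mem h, hag u h]
            exact hU u hu h
          · exact (overwrite_not_mem h).symm
        rw [this]
        simp
    · rw [if_neg hcond, zero_mul]

end Boundary

section Chain

variable {V : Type} [Fintype V] [DecidableEq V] {q : ℕ}
variable {G : SimpleGraph V} {AE : Fin q → Fin q → ℝ} {AV : Fin q → ℝ}

lemma costOn_le_ham_sub_one
    (hAEnn : ∀ i j, 0 ≤ AE i j) (hAVnn : ∀ i, 0 ≤ AV i) (hperm : Permissive G AE AV)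
    {κ : ((V → Fin q) × (V → Fin q)) → ℝ}
    {P : Finset V} {ρ ρ' : V → Fin q} {u : V} {U : Finset V}
    (hκ : IsCoupling κ (condDist G AE AV P ρ) (condDist G AE AV P ρ'))
    (huP : u ∈ P) (hval : ρ u ≠ ρ' u) (huU : u ∉ U) :
    costOn U κ ≤ (∑ p : (V → Fin q) × (V → Fin q), κ p * hamming p.1 p.2) - 1 := by
  have hsum1 : ∑ p : (V → Fin q) × (V → Fin q), κ p = 1 :=
    coupling_sum_one hκ (condDist_isDist hAEnn hAVnn hperm P ρ)
  have key : ∀ p : (V → Fin q) × (V → Fin q),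
      κ p * ((U.filter fun w => p.1 w ≠ p.2 w).card : ℝ)
        ≤ κ p * (hamming p.1 p.2 - 1) := by
    intro p
    by_cases h0 : κ p = 0
    · rw [h0, zero_mul, zero_mul]
    · refine mul_le_mul_of_nonneg_left ?_ (hκ.1 p)
      have h0' : κ (p.1, p.2) ≠ 0 := by rwa [Prod.mk.eta]
      have h1 : p.1 u = ρ u :=
        condDist_agree hperm (coupling_fst_pos hκ h0') u huP
      have h2 : p.2 u = ρ' u :=
        condDist_agree hperm (coupling_snd_pos hκ h0') u huP
      have hdis : p.1 u ≠ p.2 u := by rw [h1, h2]; exact hval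
      have hu_mem : u ∈ Finset.univ.filter fun w => p.1 w ≠ p.2 w :=
        Finset.mem_filter.mpr ⟨Finset.mem_univ u, hdis⟩
      have hsub : (U.filter fun w => p.1 w ≠ p.2 w)
          ⊆ (Finset.univ.filter fun w => p.1 w ≠ p.2 w).erase u := by
        intro w hw
        rw [Finset.mem_filter] at hw
        exact Finset.mem_erase.mpr ⟨fun he => huU (he ▸ hw.1),
          Finset.mem_filter.mpr ⟨Finset.mem_univ w, hw.2⟩⟩
      have hcard : (U.filter fun w => p.1 w ≠ p.2 w).card
          ≤ (Finset.univ.filter fun w => p.1 w ≠ p.2 w).card - 1 := by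
        calc (U.filter fun w => p.1 w ≠ p.2 w).card
            ≤ ((Finset.univ.filter fun w => p.1 w ≠ p.2 w).erase u).card :=
              Finset.card_le_card hsub
          _ = (Finset.univ.filter fun w => p.1 w ≠ p.2 w).card - 1 :=
              Finset.card_erase_of_mem hu_mem
      have h1le : 1 ≤ (Finset.univ.filter fun w => p.1 w ≠ p.2 w).card :=
        Finset.card_pos.mpr ⟨u, hu_mem⟩
      calc ((U.filter fun w => p.1 w ≠ p.2 w).card : ℝ)
          ≤ (((Finset.univ.filter fun w => p.1 w ≠ p.2 w).card - 1 : ℕ) : ℝ) :=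
            Nat.cast_le.mpr hcard
        _ = hamming p.1 p.2 - 1 := by
            rw [Nat.cast_sub h1le]
            unfold hamming
            norm_num
  calc costOn U κ ≤ ∑ p : (V → Fin q) × (V → Fin q), κ p * (hamming p.1 p.2 - 1) :=
        Finset.sum_le_sum fun p _ => key p
    _ = (∑ p : (V → Fin q) × (V → Fin q), κ p * hamming p.1 p.2)
          - ∑ p : (V → Fin q) × (V → Fin q), κ p := by
        rw [← Finset.sum_sub_distrib]
        exact Finset.sum_congr rfl fun p _ => by ring
    _ = (∑ p : (V → Fin q) × (V → Fin q), κ p * hamming p.1 p.2) - 1 := by rw [hsum1]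

lemma exists_CI_coupling {C : ℝ} (hCI : CouplingIndependence G AE AV C)
    (hAEnn : ∀ i j, 0 ≤ AE i j) (hAVnn : ∀ i, 0 ≤ AV i) (hperm : Permissive G AE AV)
    {P : Finset V} {ρ ρ' : V → Fin q} {u : V} (hd : DifferOnlyAt P ρ ρ' u)
    {U : Finset V} (huU : u ∉ U) {δ : ℝ} (hδ : 0 < δ) :
    ∃ κ : ((V → Fin q) × (V → Fin q)) → ℝ,
      IsCoupling κ (condDist G AE AV P ρ) (condDist G AE AV P ρ') ∧
      costOn U κ < C - 1 + δ := by
  obtain ⟨κ, hκ, hcost⟩ := exists_coupling_cost_lt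
    (condDist_isDist hAEnn hAVnn hperm P ρ) (condDist_isDist hAEnn hAVnn hperm P ρ')
    (hCI P ρ ρ' u hd) hδ
  refine ⟨κ, hκ, ?_⟩
  have := costOn_le_ham_sub_one hAEnn hAVnn hperm hκ hd.1 hd.2.1 huU
  linarith

/-- Chain coupling: flipping the disagreements in `F` one at a time. -/
lemma exists_chain_coupling
    (hAEnn : ∀ i j, 0 ≤ AE i j) (hAVnn : ∀ i, 0 ≤ AV i) (hperm : Permissive G AE AV)
    {C : ℝ} (hCI : CouplingIndependence G AE AV C) {δ : ℝ} (hδ : 0 < δ)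
    (hC1 : 0 ≤ C - 1 + δ)
    {P U : Finset V} {x y : V → Fin q} (F : Finset V)
    (hF : ∀ w ∈ F, w ∈ P ∧ w ∉ U ∧ x w ≠ y w) :
    ∃ κ : ((V → Fin q) × (V → Fin q)) → ℝ,
      IsCoupling κ (condDist G AE AV P x) (condDist G AE AV P (overwrite x y F)) ∧
      costOn U κ ≤ (C - 1 + δ) * F.card := by
  classical
  revert hF
  induction F using Finset.induction_on with
  | empty =>
    intro _
    have hov : overwrite x y ∅ = x := funext fun u => overwrite_not_mem (Finset.notMem_empty u)
    rw [hov]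
    obtain ⟨κ, hκ, hcost⟩ := diag_coupling (condDist_isDist hAEnn hAVnn hperm P x)
    exact ⟨κ, hκ, by rw [hcost U]; simp⟩
  | @insert w F hw ih =>
    intro hF
    obtain ⟨κ₁, hκ₁, hc₁⟩ := ih fun a ha => hF a (Finset.mem_insert_of_mem ha)
    obtain ⟨hwP, hwU, hxyw⟩ := hF w (Finset.mem_insert_self w F)
    have hd : DifferOnlyAt P (overwrite x y F) (overwrite x y (insert w F)) w := by
      refine ⟨hwP, ?_, ?_⟩
      · rw [overwrite_not_mem hw, overwrite_mem (Finset.mem_insert_self w F)]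
        exact hxyw
      · intro a _ haw
        by_cases h : a ∈ F
        · rw [overwrite_mem h, overwrite_mem (Finset.mem_insert_of_mem h)]
        · rw [overwrite_not_mem h, overwrite_not_mem
            (fun hmem => (Finset.mem_insert.mp hmem).elim haw h)]
    obtain ⟨κ₂, hκ₂, hc₂⟩ := exists_CI_coupling hCI hAEnn hAVnn hperm hd hwU hδ
    obtain ⟨κ₃, hκ₃, hc₃⟩ := glue hκ₁ hκ₂
    refine ⟨κ₃, hκ₃, ?_⟩
    have hcard : ((insert w F).card : ℝ) = (F.card : ℝ) + 1 := by
      rw [Finset.card_insert_of_notMem hw]; push_cast; ring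
    calc costOn U κ₃ ≤ costOn U κ₁ + costOn U κ₂ := hc₃ U
      _ ≤ (C - 1 + δ) * F.card + (C - 1 + δ) := by
          have := hc₂.le
          linarith
      _ = (C - 1 + δ) * ((insert w F).card : ℝ) := by rw [hcard]; ring

end Chain

section Tower

variable {V : Type} [Fintype V] [DecidableEq V] {q : ℕ}
variable {G : SimpleGraph V} {AE : Fin q → Fin q → ℝ} {AV : Fin q → ℝ}

lemma edgeFactor_congr {x x' : V → Fin q} {e : Sym2 V} (h : ∀ a ∈ e, x a = x' a) :
    edgeFactor AE x e = edgeFactor AE x' e := by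
  revert h
  induction e using Sym2.ind with
  | _ u w =>
    intro h
    simp only [edgeFactor, Sym2.lift_mk]
    rw [h u (Sym2.mem_mk_left u w), h w (Sym2.mem_mk_right u w)]

/-- The key exchange identity behind the tower property. -/
lemma mul_swap_helper {i A1 A2 A3 A4 E1 E2 E3 E4 : ℝ}
    (hA : A1 * A2 = A3 * A4) (hE : E1 * E2 = E3 * E4) :
    i * A1 * E1 * (1 * A2 * E2) = i * A3 * E3 * (1 * A4 * E4) := by
  calc i * A1 * E1 * (1 * A2 * E2) = i * ((A1 * A2) * (E1 * E2)) := by ring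
    _ = i * ((A3 * A4) * (E3 * E4)) := by rw [hA, hE]
    _ = i * A3 * E3 * (1 * A4 * E4) := by ring

lemma condWeight_mul_swap {Λ P : Finset V} (hΛP : Λ ⊆ P) (σ x a : V → Fin q) :
    condWeight G AE AV Λ σ x * condWeight G AE AV P x a
      = condWeight G AE AV Λ σ a * condWeight G AE AV P a x := by
  by_cases hxa : ∀ u ∈ P, a u = x u
  · have hxa' : ∀ u ∈ P, x u = a u := fun u hu => (hxa u hu).symm
    have hind : (if ∀ v ∈ Λ, x v = σ v then (1 : ℝ) else 0)
        = (if ∀ v ∈ Λ, a v = σ v then (1 : ℝ) else 0) := by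
      have hiff : (∀ v ∈ Λ, x v = σ v) ↔ (∀ v ∈ Λ, a v = σ v) := by
        constructor <;> intro hh u hu
        · rw [hxa u (hΛP hu)]; exact hh u hu
        · rw [hxa' u (hΛP hu)]; exact hh u hu
      simp only [hiff]
    have hAVsplit : (∏ v ∈ Λᶜ, AV (x v)) * (∏ v ∈ Pᶜ, AV (a v))
        = (∏ v ∈ Λᶜ, AV (a v)) * (∏ v ∈ Pᶜ, AV (x v)) := by
      have hunion : (Λᶜ : Finset V) = Pᶜ ∪ (P \ Λ) := by
        ext u
        simp only [Finset.mem_compl, Finset.mem_union, Finset.mem_sdiff]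
        constructor
        · intro hu
          by_cases h : u ∈ P
          · exact Or.inr ⟨h, hu⟩
          · exact Or.inl h
        · rintro (h | ⟨-, h⟩)
          · exact fun hu => h (hΛP hu)
          · exact h
      have hdisj : Disjoint (Pᶜ : Finset V) (P \ Λ) := by
        rw [Finset.disjoint_left]
        intro u hu hu2
        exact (Finset.mem_compl.mp hu) (Finset.mem_sdiff.mp hu2).1
      have hmid : (∏ v ∈ P \ Λ, AV (x v)) = ∏ v ∈ P \ Λ, AV (a v) :=
        Finset.prod_congr rfl fun u hu => by rw [hxa' u (Finset.mem_sdiff.mp hu).1]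
      rw [hunion, Finset.prod_union hdisj, Finset.prod_union hdisj, hmid]
      ring
    have hTsub : (Finset.univ.filter
          (fun e : Sym2 V => e ∈ G.edgeSet ∧ ¬ ∀ v ∈ e, v ∈ P))
        ⊆ (Finset.univ.filter
          (fun e : Sym2 V => e ∈ G.edgeSet ∧ ¬ ∀ v ∈ e, v ∈ Λ)) := by
      intro e he
      rw [Finset.mem_filter] at he ⊢
      exact ⟨he.1, he.2.1, fun h => he.2.2 fun a' ha' => hΛP (h a' ha')⟩
    have hEsplit : ∀ z z' : V → Fin q, (∀ u ∈ P, z u = z' u) →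
        (∏ e ∈ Finset.univ.filter
            (fun e : Sym2 V => e ∈ G.edgeSet ∧ ¬ ∀ v ∈ e, v ∈ Λ), edgeFactor AE z e)
          * (∏ e ∈ Finset.univ.filter
            (fun e : Sym2 V => e ∈ G.edgeSet ∧ ¬ ∀ v ∈ e, v ∈ P), edgeFactor AE z' e)
        = (∏ e ∈ Finset.univ.filter
            (fun e : Sym2 V => e ∈ G.edgeSet ∧ ¬ ∀ v ∈ e, v ∈ Λ), edgeFactor AE z' e)
          * (∏ e ∈ Finset.univ.filter
            (fun e : Sym2 V => e ∈ G.edgeSet ∧ ¬ ∀ v ∈ e, v ∈ P), edgeFactor AE z e) := by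
      intro z z' hz
      have hsd : ∀ w : V → Fin q,
          (∏ e ∈ Finset.univ.filter
            (fun e : Sym2 V => e ∈ G.edgeSet ∧ ¬ ∀ v ∈ e, v ∈ Λ), edgeFactor AE w e)
          = (∏ e ∈ (Finset.univ.filter
                (fun e : Sym2 V => e ∈ G.edgeSet ∧ ¬ ∀ v ∈ e, v ∈ Λ))
              \ (Finset.univ.filter
                (fun e : Sym2 V => e ∈ G.edgeSet ∧ ¬ ∀ v ∈ e, v ∈ P)), edgeFactor AE w e)
            * ∏ e ∈ Finset.univ.filter
                (fun e : Sym2 V => e ∈ G.edgeSet ∧ ¬ ∀ v ∈ e, v ∈ P), edgeFactor AE w e :=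
        fun w => (Finset.prod_sdiff hTsub).symm
      have hdiff : (∏ e ∈ (Finset.univ.filter
              (fun e : Sym2 V => e ∈ G.edgeSet ∧ ¬ ∀ v ∈ e, v ∈ Λ))
            \ (Finset.univ.filter
              (fun e : Sym2 V => e ∈ G.edgeSet ∧ ¬ ∀ v ∈ e, v ∈ P)), edgeFactor AE z e)
          = ∏ e ∈ (Finset.univ.filter
              (fun e : Sym2 V => e ∈ G.edgeSet ∧ ¬ ∀ v ∈ e, v ∈ Λ))
            \ (Finset.univ.filter
              (fun e : Sym2 V => e ∈ G.edgeSet ∧ ¬ ∀ v ∈ e, v ∈ P)), edgeFactor AE z' e := by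
        refine Finset.prod_congr rfl fun e he => ?_
        rw [Finset.mem_sdiff, Finset.mem_filter, Finset.mem_filter] at he
        have hallP : ∀ a' ∈ e, a' ∈ P := by
          by_contra hP
          exact he.2 ⟨Finset.mem_univ e, he.1.2.1, hP⟩
        exact edgeFactor_congr fun a' ha' => hz a' (hallP a' ha')
      rw [hsd z, hsd z', hdiff]
      ring
    unfold condWeight
    rw [if_pos hxa, if_pos hxa', hind]
    exact mul_swap_helper hAVsplit (hEsplit x a hxa')
  · have hax : ¬ ∀ u ∈ P, x u = a u := fun h => hxa fun u hu => (h u hu).symm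
    rw [condWeight_eq_zero_of_disagree hxa, condWeight_eq_zero_of_disagree hax,
      mul_zero, mul_zero]

/-- Tower property of conditional Gibbs distributions. -/
lemma tower (hAEnn : ∀ i j, 0 ≤ AE i j) (hAVnn : ∀ i, 0 ≤ AV i)
    (hperm : Permissive G AE AV) {Λ P : Finset V} (hΛP : Λ ⊆ P)
    (σ a : V → Fin q) :
    ∑ x : V → Fin q, condDist G AE AV Λ σ x * condDist G AE AV P x a
      = condDist G AE AV Λ σ a := by
  have hstep : ∀ x : V → Fin q,
      condDist G AE AV Λ σ x * condDist G AE AV P x a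
        = condWeight G AE AV Λ σ a * condWeight G AE AV P a x
            / (condZ G AE AV Λ σ * condZ G AE AV P a) := by
    intro x
    unfold condDist
    by_cases hxa : ∀ u ∈ P, a u = x u
    · have hZ : condZ G AE AV P x = condZ G AE AV P a :=
        condZ_pin_congr fun u hu => (hxa u hu).symm
      rw [hZ, div_mul_div_comm, condWeight_mul_swap hΛP σ x a]
    · have hax : ¬ ∀ u ∈ P, x u = a u := fun h => hxa fun u hu => (h u hu).symm
      rw [condWeight_eq_zero_of_disagree hxa, condWeight_eq_zero_of_disagree hax]
      simp
  simp only [hstep]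
  rw [← Finset.sum_div, ← Finset.mul_sum]
  have hZdef : ∑ x : V → Fin q, condWeight G AE AV P a x = condZ G AE AV P a := rfl
  rw [hZdef]
  unfold condDist
  rw [mul_comm (condZ G AE AV Λ σ) (condZ G AE AV P a), mul_comm (condWeight G AE AV Λ σ a) (condZ G AE AV P a)]
  rw [mul_div_mul_left _ _ (hperm P a).ne']

end Tower

section Composite

variable {V : Type} [Fintype V] [DecidableEq V] {q : ℕ}
variable {G : SimpleGraph V} {AE : Fin q → Fin q → ℝ} {AV : Fin q → ℝ}

/-- Two-stage (composite) coupling: sample from `π`, then recouple via `κ`. -/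
lemma composite_coupling (hAEnn : ∀ i j, 0 ≤ AE i j) (hAVnn : ∀ i, 0 ≤ AV i)
    (hperm : Permissive G AE AV)
    {Λ P : Finset V} (hΛP : Λ ⊆ P) {σ τ : V → Fin q}
    {π : ((V → Fin q) × (V → Fin q)) → ℝ}
    (hπ : IsCoupling π (condDist G AE AV Λ σ) (condDist G AE AV Λ τ))
    (κ : ((V → Fin q) × (V → Fin q)) → ((V → Fin q) × (V → Fin q)) → ℝ)
    (hκ : ∀ p, IsCoupling (κ p) (condDist G AE AV P p.1) (condDist G AE AV P p.2)) :
    IsCoupling (fun r => ∑ p : (V → Fin q) × (V → Fin q), π p * κ p r)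
        (condDist G AE AV Λ σ) (condDist G AE AV Λ τ)
      ∧ ∀ U : Finset V,
          costOn U (fun r => ∑ p : (V → Fin q) × (V → Fin q), π p * κ p r)
          = ∑ p : (V → Fin q) × (V → Fin q), π p * costOn U (κ p) := by
  constructor
  · refine ⟨fun r => Finset.sum_nonneg fun p _ => mul_nonneg (hπ.1 p) ((hκ p).1 r), ?_, ?_⟩
    · intro x
      calc ∑ y, ∑ p : (V → Fin q) × (V → Fin q), π p * κ p (x, y)
          = ∑ p : (V → Fin q) × (V → Fin q), ∑ y, π p * κ p (x, y) := Finset.sum_comm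
        _ = ∑ p : (V → Fin q) × (V → Fin q), π p * condDist G AE AV P p.1 x := by
            refine Finset.sum_congr rfl fun p _ => ?_
            rw [← Finset.mul_sum, (hκ p).2.1]
        _ = ∑ a, (∑ b, π (a, b)) * condDist G AE AV P a x := by
            rw [Fintype.sum_prod_type]
            exact Finset.sum_congr rfl fun a _ => by rw [Finset.sum_mul]
        _ = ∑ a, condDist G AE AV Λ σ a * condDist G AE AV P a x := by
            refine Finset.sum_congr rfl fun a _ => ?_
            rw [hπ.2.1 a]
        _ = condDist G AE AV Λ σ x := tower hAEnn hAVnn hperm hΛP σ x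
    · intro y
      calc ∑ x, ∑ p : (V → Fin q) × (V → Fin q), π p * κ p (x, y)
          = ∑ p : (V → Fin q) × (V → Fin q), ∑ x, π p * κ p (x, y) := Finset.sum_comm
        _ = ∑ p : (V → Fin q) × (V → Fin q), π p * condDist G AE AV P p.2 y := by
            refine Finset.sum_congr rfl fun p _ => ?_
            rw [← Finset.mul_sum, (hκ p).2.2]
        _ = ∑ a, ∑ b, π (a, b) * condDist G AE AV P b y := Fintype.sum_prod_type _
        _ = ∑ b, (∑ a, π (a, b)) * condDist G AE AV P b y := by
            rw [Finset.sum_comm]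
            exact Finset.sum_congr rfl fun b _ => by rw [Finset.sum_mul]
        _ = ∑ b, condDist G AE AV Λ τ b * condDist G AE AV P b y := by
            refine Finset.sum_congr rfl fun b _ => ?_
            rw [hπ.2.2 b]
        _ = condDist G AE AV Λ τ y := tower hAEnn hAVnn hperm hΛP τ y
  · intro U
    unfold costOn
    calc ∑ r : (V → Fin q) × (V → Fin q),
          (∑ p : (V → Fin q) × (V → Fin q), π p * κ p r)
            * ((U.filter fun u => r.1 u ≠ r.2 u).card : ℝ)
        = ∑ r : (V → Fin q) × (V → Fin q), ∑ p : (V → Fin q) × (V → Fin q),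
            π p * (κ p r * ((U.filter fun u => r.1 u ≠ r.2 u).card : ℝ)) := by
          refine Finset.sum_congr rfl fun r _ => ?_
          rw [Finset.sum_mul]
          exact Finset.sum_congr rfl fun p _ => by ring
      _ = ∑ p : (V → Fin q) × (V → Fin q), ∑ r : (V → Fin q) × (V → Fin q),
            π p * (κ p r * ((U.filter fun u => r.1 u ≠ r.2 u).card : ℝ)) := Finset.sum_comm
      _ = ∑ p : (V → Fin q) × (V → Fin q), π p * costOn U (κ p) := by
          refine Finset.sum_congr rfl fun p _ => ?_
          rw [← Finset.mul_sum]
          rfl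

/-- Support of a coupling of two conditional distributions agrees with the pinnings. -/
lemma coupling_support_agree (hperm : Permissive G AE AV)
    {Λ : Finset V} {σ τ : V → Fin q} {π : ((V → Fin q) × (V → Fin q)) → ℝ}
    (hπ : IsCoupling π (condDist G AE AV Λ σ) (condDist G AE AV Λ τ))
    {x y : V → Fin q} (h : π (x, y) ≠ 0) :
    (∀ u ∈ Λ, x u = σ u) ∧ (∀ u ∈ Λ, y u = τ u) :=
  ⟨condDist_agree hperm (coupling_fst_pos hπ h),
    condDist_agree hperm (coupling_snd_pos hπ h)⟩

end Composite


section Geometry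

variable {V : Type} [Fintype V] [DecidableEq V]
variable {G : SimpleGraph V}

/-- The ball of radius `r` around `v`. -/
def gball (G : SimpleGraph V) (v : V) (r : ℕ) : Finset V :=
  Finset.univ.filter fun u => G.Reachable v u ∧ G.dist v u ≤ r

/-- Vertices at distance at least `ℓ` from `v`. -/
def gfar (G : SimpleGraph V) (v : V) (ℓ : ℕ) : Finset V :=
  Finset.univ.filter fun u => G.Reachable v u ∧ ℓ ≤ G.dist v u

lemma mem_gball_iff {v u : V} {r : ℕ} :
    u ∈ gball G v r ↔ G.Reachable v u ∧ G.dist v u ≤ r := by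
  simp [gball, Finset.mem_filter]

lemma mem_gfar_iff {v u : V} {ℓ : ℕ} :
    u ∈ gfar G v ℓ ↔ G.Reachable v u ∧ ℓ ≤ G.dist v u := by
  simp [gfar, Finset.mem_filter]

lemma mem_sphere_iff {v u : V} {r : ℕ} :
    u ∈ sphere G v r ↔ G.Reachable v u ∧ G.dist v u = r := by
  rw [SpinFormal.sphere, Finset.mem_filter]
  simp

lemma self_mem_gball (v : V) (r : ℕ) : v ∈ gball G v r :=
  mem_gball_iff.mpr ⟨SimpleGraph.Reachable.refl v, by rw [SimpleGraph.dist_self]; exact Nat.zero_le r⟩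

lemma self_not_mem_gfar {v : V} {m : ℕ} (hm : 0 < m) : v ∉ gfar G v m := by
  intro hmem
  have := (mem_gfar_iff.mp hmem).2
  rw [SimpleGraph.dist_self] at this
  omega

lemma sphere_subset_gball {v : V} {r : ℕ} : sphere G v r ⊆ gball G v r := by
  intro u hu
  obtain ⟨h1, h2⟩ := mem_sphere_iff.mp hu
  exact mem_gball_iff.mpr ⟨h1, le_of_eq h2⟩

lemma sphere_subset_gfar {v : V} {r ℓ : ℕ} (h : ℓ ≤ r) : sphere G v r ⊆ gfar G v ℓ := by
  intro u hu
  obtain ⟨h1, h2⟩ := mem_sphere_iff.mp hu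
  exact mem_gfar_iff.mpr ⟨h1, h2 ▸ h⟩

lemma gfar_anti {v : V} {ℓ ℓ' : ℕ} (h : ℓ ≤ ℓ') : gfar G v ℓ' ⊆ gfar G v ℓ := by
  intro u hu
  obtain ⟨h1, h2⟩ := mem_gfar_iff.mp hu
  exact mem_gfar_iff.mpr ⟨h1, le_trans h h2⟩

lemma not_mem_gfar_of_mem_gball {v u : V} {r ℓ : ℕ} (hu : u ∈ gball G v r) (h : r < ℓ) :
    u ∉ gfar G v ℓ := by
  intro hc
  have h1 := (mem_gball_iff.mp hu).2
  have h2 := (mem_gfar_iff.mp hc).2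
  omega

/-- A vertex of the ball adjacent to a vertex outside the ball lies on the sphere. -/
lemma gball_boundary {v u w : V} {r : ℕ} (hu : u ∈ gball G v r) (hadj : G.Adj u w)
    (hw : w ∉ gball G v r) : G.dist v u = r := by
  obtain ⟨hreach, hle⟩ := mem_gball_iff.mp hu
  by_contra hne
  have hlt : G.dist v u < r := lt_of_le_of_ne hle hne
  obtain ⟨p, hp⟩ := hreach.exists_walk_length_eq_dist
  have hwreach : G.Reachable v w := ⟨p.concat hadj⟩
  have hwd : G.dist v w ≤ r := by
    have := SimpleGraph.dist_le (p.concat hadj)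
    rw [SimpleGraph.Walk.length_concat, hp] at this
    omega
  exact hw (mem_gball_iff.mpr ⟨hwreach, hwd⟩)

end Geometry

section Pigeonhole

variable {V : Type} [Fintype V] [DecidableEq V] {q : ℕ} {G : SimpleGraph V}

lemma sphere_sum_le_gfar {π : ((V → Fin q) × (V → Fin q)) → ℝ}
    (hπ0 : ∀ p, 0 ≤ π p) (v : V) (ℓ s : ℕ) :
    ∑ r ∈ Finset.Ico ℓ (ℓ + s), costOn (sphere G v r) π ≤ costOn (gfar G v ℓ) π := by
  unfold costOn
  rw [Finset.sum_comm]
  refine Finset.sum_le_sum fun p _ => ?_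
  rw [← Finset.mul_sum]
  refine mul_le_mul_of_nonneg_left ?_ (hπ0 p)
  have hdisj : ∀ r ∈ Finset.Ico ℓ (ℓ + s), ∀ r' ∈ Finset.Ico ℓ (ℓ + s), r ≠ r' →
      Disjoint ((sphere G v r).filter fun u => p.1 u ≠ p.2 u)
        ((sphere G v r').filter fun u => p.1 u ≠ p.2 u) := by
    intro r _ r' _ hne
    rw [Finset.disjoint_left]
    intro a ha ha'
    rw [Finset.mem_filter] at ha ha'
    have h1 := (mem_sphere_iff.mp ha.1).2
    have h2 := (mem_sphere_iff.mp ha'.1).2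
    exact hne (h1 ▸ h2 ▸ rfl)
  have hsub : (Finset.Ico ℓ (ℓ + s)).biUnion
      (fun r => (sphere G v r).filter fun u => p.1 u ≠ p.2 u)
      ⊆ (gfar G v ℓ).filter fun u => p.1 u ≠ p.2 u := by
    intro a ha
    rw [Finset.mem_biUnion] at ha
    obtain ⟨r, hr, ha⟩ := ha
    rw [Finset.mem_filter] at ha ⊢
    exact ⟨sphere_subset_gfar (Finset.mem_Ico.mp hr).1 ha.1, ha.2⟩
  calc ∑ r ∈ Finset.Ico ℓ (ℓ + s),
        (((sphere G v r).filter fun u => p.1 u ≠ p.2 u).card : ℝ)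
      = ((∑ r ∈ Finset.Ico ℓ (ℓ + s),
          ((sphere G v r).filter fun u => p.1 u ≠ p.2 u).card : ℕ) : ℝ) := by
        push_cast; ring
    _ = ((((Finset.Ico ℓ (ℓ + s)).biUnion
          (fun r => (sphere G v r).filter fun u => p.1 u ≠ p.2 u)).card : ℕ) : ℝ) := by
        rw [Finset.card_biUnion hdisj]
    _ ≤ (((gfar G v ℓ).filter fun u => p.1 u ≠ p.2 u).card : ℝ) :=
        Nat.cast_le.mpr (Finset.card_le_card hsub)

lemma exists_good_sphere {π : ((V → Fin q) × (V → Fin q)) → ℝ}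
    (hπ0 : ∀ p, 0 ≤ π p) (v : V) (ℓ s : ℕ) (hs : 0 < s) :
    ∃ r, ℓ ≤ r ∧ r < ℓ + s ∧
      costOn (sphere G v r) π ≤ costOn (gfar G v ℓ) π / s := by
  by_contra h
  push_neg at h
  have hlt : costOn (gfar G v ℓ) π < ∑ r ∈ Finset.Ico ℓ (ℓ + s), costOn (sphere G v r) π := by
    have hne : (Finset.Ico ℓ (ℓ + s)).Nonempty := by
      rw [Finset.nonempty_Ico]; omega
    have := Finset.sum_lt_sum_of_nonempty hne
      (f := fun _ => costOn (gfar G v ℓ) π / s)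
      (g := fun r => costOn (sphere G v r) π)
      (fun r hr => h r (Finset.mem_Ico.mp hr).1 (Finset.mem_Ico.mp hr).2)
    rw [Finset.sum_const, Nat.card_Ico] at this
    have hcard : ℓ + s - ℓ = s := by omega
    rw [hcard, nsmul_eq_mul] at this
    rw [mul_div_cancel₀] at this
    · exact this
    · exact_mod_cast hs.ne'
  exact absurd (sphere_sum_le_gfar hπ0 v ℓ s) (not_le.mpr hlt)

end Pigeonhole

end SpinProof

open SpinProof in
/-- coupling independence implies a small-disagreement coupling on the
sphere of radius `R`. -/
theorem sphere_coupling_of_coupling_independence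
    {V : Type} [Fintype V] [DecidableEq V] {q : ℕ}
    (G : SimpleGraph V) (AE : Fin q → Fin q → ℝ) (AV : Fin q → ℝ)
    (hq : 2 ≤ q)
    (hAEsymm : ∀ i j, AE i j = AE j i)
    (hAEnn : ∀ i j, 0 ≤ AE i j) (hAVnn : ∀ i, 0 ≤ AV i)
    (hperm : Permissive G AE AV)
    (C : ℝ) (hC : 0 < C) (hCI : CouplingIndependence G AE AV C)
    (R : ℕ) (hR : 0 < R)
    (Λ : Finset V) (σ τ : V → Fin q) (v : V) (hdiff : DifferOnlyAt Λ σ τ v) :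
    ∃ π : ((V → Fin q) × (V → Fin q)) → ℝ,
      IsCoupling π (condDist G AE AV Λ σ) (condDist G AE AV Λ τ) ∧
      ∑ p : (V → Fin q) × (V → Fin q),
          π p * (((sphere G v R).filter fun u => p.1 u ≠ p.2 u).card : ℝ)
        ≤ 2 * C * ((1 : ℝ) / 2) ^ (⌈(R : ℝ) / (2 * C)⌉ : ℤ) := by
  classical
  have hμσ : IsDist (condDist G AE AV Λ σ) := condDist_isDist hAEnn hAVnn hperm Λ σ
  have hμτ : IsDist (condDist G AE AV Λ τ) := condDist_isDist hAEnn hAVnn hperm Λ τ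
  -- Step 1 : C ≥ 1.
  have hC1 : 1 ≤ C := by
    refine le_trans ?_ (hCI Λ σ τ v hdiff)
    refine wass_ge_of_forall hμσ hμτ ?_
    intro π hπ
    rw [← coupling_sum_one hπ hμσ]
    refine Finset.sum_le_sum fun p _ => ?_
    by_cases h0 : π p = 0
    · rw [h0, zero_mul]
    · have h0' : π (p.1, p.2) ≠ 0 := by rwa [Prod.mk.eta]
      have hx := condDist_agree hperm (coupling_fst_pos hπ h0') v hdiff.1
      have hy := condDist_agree hperm (coupling_snd_pos hπ h0') v hdiff.1
      have hdis : p.1 v ≠ p.2 v := by rw [hx, hy]; exact hdiff.2.1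
      have hham : (1 : ℝ) ≤ hamming p.1 p.2 := by
        unfold hamming
        have hpos : 0 < (Finset.univ.filter fun w => p.1 w ≠ p.2 w).card :=
          Finset.card_pos.mpr ⟨v, Finset.mem_filter.mpr ⟨Finset.mem_univ v, hdis⟩⟩
        exact_mod_cast hpos
      exact le_mul_of_one_le_right (hπ.1 p) hham
  -- Step 2 : arithmetic setup.
  have h2C : (0 : ℝ) < 2 * C := by linarith
  set k : ℤ := ⌈(R : ℝ) / (2 * C)⌉ with hkdef
  have hk0 : 0 < k := Int.ceil_pos.mpr (div_pos (by exact_mod_cast hR) h2C)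
  set N : ℕ := (k - 1).toNat with hNdef
  have hNk : ((N : ℤ)) = k - 1 := by rw [hNdef]; exact Int.toNat_of_nonneg (by omega)
  have hT : 2 * C * ((1 : ℝ) / 2) ^ (k : ℤ) = C * (1 / 2 : ℝ) ^ N := by
    have hkne : ((1 : ℝ) / 2) ^ (k : ℤ) = ((1 : ℝ) / 2) ^ ((N + 1 : ℕ) : ℤ) := by
      congr 1
      push_cast
      omega
    rw [hkne, zpow_natCast, pow_succ]
    ring
  set s : ℕ := max 1 ⌈2 * C - 2⌉₊ with hsdef
  have hs0 : 0 < s := lt_of_lt_of_le Nat.zero_lt_one (le_max_left _ _)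
  have hspos : (0 : ℝ) < (s : ℝ) := by exact_mod_cast hs0
  have hs2C : 2 * (C - 1) ≤ (s : ℝ) := by
    have h1 : (2 * C - 2 : ℝ) ≤ (⌈2 * C - 2⌉₊ : ℝ) := Nat.le_ceil _
    have h2 : ((⌈2 * C - 2⌉₊ : ℕ) : ℝ) ≤ (s : ℝ) := by
      exact_mod_cast le_max_right 1 ⌈2 * C - 2⌉₊
    linarith
  have hRC : 2 * C * (N : ℝ) < R := by
    have hceil : (k : ℝ) < (R : ℝ) / (2 * C) + 1 := by
      rw [hkdef]; exact_mod_cast Int.ceil_lt_add_one ((R : ℝ) / (2 * C))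
    have hNr : (N : ℝ) = (k : ℝ) - 1 := by exact_mod_cast hNk
    have hNlt : (N : ℝ) < (R : ℝ) / (2 * C) := by rw [hNr]; linarith
    calc 2 * C * (N : ℝ) < 2 * C * ((R : ℝ) / (2 * C)) := by
          exact mul_lt_mul_of_pos_left hNlt h2C
      _ = R := by field_simp
  have hNsR : N * s + 1 ≤ R := by
    by_cases hNzero : N = 0
    · rw [hNzero]; simpa using (Nat.succ_le_of_lt hR : 1 ≤ R)
    · have hN1 : 1 ≤ N := Nat.one_le_iff_ne_zero.mpr hNzero
      by_cases hCs : 2 * C - 2 ≤ 1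
      · have hsm : ⌈2 * C - 2⌉₊ ≤ 1 := Nat.ceil_le.mpr (by exact_mod_cast hCs)
        have hseq : s = 1 := by rw [hsdef]; omega
        rw [hseq, mul_one]
        have hkR : k ≤ (R : ℤ) := by
          rw [hkdef]
          calc ⌈(R : ℝ) / (2 * C)⌉ ≤ ⌈(R : ℝ)⌉ :=
              Int.ceil_le_ceil (div_le_self (by positivity) (by linarith))
            _ = (R : ℤ) := Int.ceil_natCast R
        omega
      · push_neg at hCs
        have hm1 : 1 ≤ ⌈2 * C - 2⌉₊ := Nat.ceil_pos.mpr (by linarith)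
        have hseq : s = ⌈2 * C - 2⌉₊ := by rw [hsdef]; exact max_eq_right hm1
        have hsub : (s : ℝ) < 2 * C - 1 := by
          rw [hseq]
          have := Nat.ceil_lt_add_one (show (0 : ℝ) ≤ 2 * C - 2 by linarith)
          linarith
        have hNge : (1 : ℝ) ≤ (N : ℝ) := by exact_mod_cast hN1
        have hstep : ((N * s + 1 : ℕ) : ℝ) < (R : ℝ) := by
          push_cast
          have h1 : (N : ℝ) * s ≤ (N : ℝ) * (2 * C - 1) :=
            mul_le_mul_of_nonneg_left hsub.le (by positivity)
          nlinarith [hRC]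
        exact le_of_lt (by exact_mod_cast hstep)
  -- Step 3 : choice of δ.
  have hbase : (C - 1 + 0) ^ (N + 1) / (s : ℝ) ^ N < C * (1 / 2 : ℝ) ^ N := by
    rw [add_zero]
    have hC10 : (0 : ℝ) ≤ C - 1 := by linarith
    have h12 : (C - 1) / (s : ℝ) ≤ 1 / 2 := by
      rw [div_le_div_iff₀ hspos (by norm_num : (0 : ℝ) < 2)]
      linarith
    have h3 : ((C - 1) / (s : ℝ)) ^ N ≤ (1 / 2 : ℝ) ^ N :=
      pow_le_pow_left₀ (div_nonneg hC10 hspos.le) h12 N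
    have h4 : (C - 1) ^ (N + 1) / (s : ℝ) ^ N = (C - 1) * ((C - 1) / (s : ℝ)) ^ N := by
      rw [div_pow, pow_succ]
      ring
    rw [h4]
    have h5 : (0 : ℝ) < (1 / 2 : ℝ) ^ N := by positivity
    calc (C - 1) * ((C - 1) / (s : ℝ)) ^ N ≤ (C - 1) * (1 / 2 : ℝ) ^ N :=
          mul_le_mul_of_nonneg_left h3 hC10
      _ < C * (1 / 2 : ℝ) ^ N := mul_lt_mul_of_pos_right (by linarith) h5
  have hcont : Filter.Tendsto (fun d : ℝ => (C - 1 + d) ^ (N + 1) / (s : ℝ) ^ N)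
      (nhdsWithin (0 : ℝ) (Set.Ioi 0)) (nhds ((C - 1 + 0) ^ (N + 1) / (s : ℝ) ^ N)) := by
    refine Filter.Tendsto.mono_left ?_ nhdsWithin_le_nhds
    exact Continuous.tendsto (by continuity) 0
  obtain ⟨δ, hδlt, hδmem⟩ :=
    ((hcont.eventually_lt_const hbase).and eventually_mem_nhdsWithin).exists
  have hδ : 0 < δ := hδmem
  have hCδ : 0 < C - 1 + δ := by linarith
  -- Step 4 : the main induction.
  have main : ∀ i : ℕ, ∃ π : ((V → Fin q) × (V → Fin q)) → ℝ,
      IsCoupling π (condDist G AE AV Λ σ) (condDist G AE AV Λ τ) ∧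
      costOn (gfar G v (1 + i * s)) π < (C - 1 + δ) ^ (i + 1) / (s : ℝ) ^ i := by
    intro i
    induction i with
    | zero =>
      obtain ⟨κ, hκ, hcost⟩ := exists_CI_coupling hCI hAEnn hAVnn hperm hdiff
        (self_not_mem_gfar (show 0 < 1 + 0 * s by omega)) hδ
      refine ⟨κ, hκ, ?_⟩
      simpa using hcost
    | succ i ih =>
      obtain ⟨π, hπ, hcost⟩ := ih
      obtain ⟨r, hrℓ, hrlt, hrcost⟩ := exists_good_sphere hπ.1 v (1 + i * s) s hs0
      set P : Finset V := Λ ∪ gball G v r with hPdef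
      have hΛP : Λ ⊆ P := Finset.subset_union_left
      have hκex : ∀ x y : V → Fin q, ∃ κ : ((V → Fin q) × (V → Fin q)) → ℝ,
          IsCoupling κ (condDist G AE AV P x) (condDist G AE AV P y) ∧
          ((∀ u ∈ Λ, x u = σ u) → (∀ u ∈ Λ, y u = τ u) →
            costOn (gfar G v (r + 1)) κ
              ≤ (C - 1 + δ) * (((sphere G v r).filter fun u => x u ≠ y u).card : ℝ)) := by
        intro x y
        by_cases hgood : (∀ u ∈ Λ, x u = σ u) ∧ (∀ u ∈ Λ, y u = τ u)
        · set F : Finset V := (sphere G v r).filter (fun u => x u ≠ y u) with hFdef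
          have hFsph : F ⊆ sphere G v r := Finset.filter_subset _ _
          have hFprop : ∀ w ∈ F, w ∈ P ∧ w ∉ gfar G v (r + 1) ∧ x w ≠ y w := by
            intro w hw
            rw [hFdef, Finset.mem_filter] at hw
            exact ⟨Finset.mem_union_right _ (sphere_subset_gball hw.1),
              not_mem_gfar_of_mem_gball (sphere_subset_gball hw.1) (Nat.lt_succ_self r),
              hw.2⟩
          obtain ⟨κ₁, hκ₁, hc₁⟩ :=
            exists_chain_coupling hAEnn hAVnn hperm hCI hδ hCδ.le F hFprop
          have hvball : v ∈ gball G v r := self_mem_gball v r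
          have hagree : ∀ u ∈ P, u ∉ gball G v r → x u = y u := by
            intro u huP hub
            have huΛ : u ∈ Λ := by
              rcases Finset.mem_union.mp huP with h | h
              · exact h
              · exact absurd h hub
            have hune : u ≠ v := fun he => hub (he ▸ hvball)
            rw [hgood.1 u huΛ, hgood.2 u huΛ]
            exact hdiff.2.2 u huΛ hune
          have hbd : ∀ u ∈ P, (∃ w, w ∉ P ∧ G.Adj u w) → overwrite x y F u = y u := by
            intro u huP hw
            by_cases huF : u ∈ F
            · exact overwrite_mem huF
            · rw [overwrite_not_mem huF]
              by_cases hub : u ∈ gball G v r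
              · obtain ⟨w, hwP, hadj⟩ := hw
                have hdist : G.dist v u = r := gball_boundary hub hadj
                  (fun hwb => hwP (Finset.mem_union_right _ hwb))
                have husph : u ∈ sphere G v r :=
                  mem_sphere_iff.mpr ⟨(mem_gball_iff.mp hub).1, hdist⟩
                by_contra hne
                exact huF (by rw [hFdef]; exact Finset.mem_filter.mpr ⟨husph, hne⟩)
              · exact hagree u huP hub
          obtain ⟨κ₂, hκ₂, hc₂⟩ := exists_identical_outside_coupling hAEnn hAVnn hperm hbd
          have hc₂0 : costOn (gfar G v (r + 1)) κ₂ = 0 := by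
            refine hc₂ _ fun u hu huP => ?_
            have hub : u ∉ gball G v r :=
              fun hb => not_mem_gfar_of_mem_gball hb (Nat.lt_succ_self r) hu
            have huF : u ∉ F := fun hf => hub (sphere_subset_gball (hFsph hf))
            rw [overwrite_not_mem huF]
            exact hagree u huP hub
          obtain ⟨κ₃, hκ₃, hc₃⟩ := glue hκ₁ hκ₂
          refine ⟨κ₃, hκ₃, fun _ _ => ?_⟩
          calc costOn (gfar G v (r + 1)) κ₃
              ≤ costOn (gfar G v (r + 1)) κ₁ + costOn (gfar G v (r + 1)) κ₂ := hc₃ _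
            _ ≤ (C - 1 + δ) * (F.card : ℝ) + 0 := by
                rw [hc₂0]
                exact add_le_add hc₁ (le_refl 0)
            _ = (C - 1 + δ) * (F.card : ℝ) := by ring
        · refine ⟨fun p => condDist G AE AV P x p.1 * condDist G AE AV P y p.2,
            prod_isCoupling (condDist_isDist hAEnn hAVnn hperm P x)
              (condDist_isDist hAEnn hAVnn hperm P y), ?_⟩
          intro h1 h2
          exact absurd ⟨h1, h2⟩ hgood
      choose κf hκf hκfc using hκex
      obtain ⟨hPi, hPicost⟩ := composite_coupling hAEnn hAVnn hperm hΛP hπ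
        (fun p => κf p.1 p.2) (fun p => hκf p.1 p.2)
      have hr1 : r + 1 ≤ 1 + (i + 1) * s := by
        have h := hrlt
        have hmul : (i + 1) * s = i * s + s := by ring
        omega
      refine ⟨_, hPi,
        lt_of_le_of_lt (costOn_mono hPi.1 (gfar_anti hr1)) ?_⟩
      rw [hPicost (gfar G v (r + 1))]
      have hsumle : ∑ p : (V → Fin q) × (V → Fin q),
          π p * costOn (gfar G v (r + 1)) (κf p.1 p.2)
          ≤ (C - 1 + δ) * costOn (sphere G v r) π := by
        rw [costOn, Finset.mul_sum]
        refine Finset.sum_le_sum fun p _ => ?_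
        by_cases hp0 : π p = 0
        · rw [hp0]
          simp
        · have hp0' : π (p.1, p.2) ≠ 0 := by rwa [Prod.mk.eta]
          obtain ⟨h1, h2⟩ := coupling_support_agree hperm hπ hp0'
          have hb := hκfc p.1 p.2 h1 h2
          calc π p * costOn (gfar G v (r + 1)) (κf p.1 p.2)
              ≤ π p * ((C - 1 + δ)
                  * (((sphere G v r).filter fun u => p.1 u ≠ p.2 u).card : ℝ)) :=
                mul_le_mul_of_nonneg_left hb (hπ.1 p)
            _ = (C - 1 + δ)
                  * (π p * (((sphere G v r).filter fun u => p.1 u ≠ p.2 u).card : ℝ)) := by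
                ring
      refine lt_of_le_of_lt hsumle ?_
      have hlt2 : costOn (sphere G v r) π < ((C - 1 + δ) ^ (i + 1) / (s : ℝ) ^ i) / s :=
        lt_of_le_of_lt hrcost ((div_lt_div_iff_of_pos_right hspos).mpr hcost)
      calc (C - 1 + δ) * costOn (sphere G v r) π
          < (C - 1 + δ) * (((C - 1 + δ) ^ (i + 1) / (s : ℝ) ^ i) / s) :=
            mul_lt_mul_of_pos_left hlt2 hCδ
        _ = (C - 1 + δ) ^ (i + 1 + 1) / (s : ℝ) ^ (i + 1) := by
            rw [pow_succ, pow_succ]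
            field_simp
            ring
  -- Step 5 : conclusion.
  obtain ⟨π, hπ, hcost⟩ := main N
  refine ⟨π, hπ, ?_⟩
  have hsub : sphere G v R ⊆ gfar G v (1 + N * s) := sphere_subset_gfar (by omega)
  have h1 : costOn (sphere G v R) π ≤ costOn (gfar G v (1 + N * s)) π :=
    costOn_mono hπ.1 hsub
  have h2 : ∑ p : (V → Fin q) × (V → Fin q),
      π p * (((sphere G v R).filter fun u => p.1 u ≠ p.2 u).card : ℝ)
      = costOn (sphere G v R) π := rfl
  rw [h2, hT]
  have h3 : (C - 1 + δ) ^ (N + 1) / (s : ℝ) ^ N < C * (1 / 2 : ℝ) ^ N := hδlt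
  linarith
end
end

section
/- Let (Ω,d) be a finite nonempty metric space, C > 0 and δ ∈ (0,1). Let P,Q : Ω → (probability distributions on Ω) be Markov transition kernels with stationary distributions μ and ν respectively (i.e. Σ_x μ(x)·P(x)(y) = μ(y) for all y ∈ Ω, and similarly for ν and Q). Suppose that (a) for every X in the support of μ, W_d(P(X),Q(X)) ≤ C, and (b) for every X in the support of μ and every Y in the support of ν, W_d(Q(X),Q(Y)) ≤ (1−δ)·d(X,Y). Then W_d(μ,ν) ≤ C/δ. -/
open scoped Classical BigOperators

noncomputable section

open SpinFormal

section WassAux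

variable {Ω : Type} [Fintype Ω] [MetricSpace Ω]

lemma wass_bddBelow (μ ν : Ω → ℝ) :
    BddBelow {c : ℝ | ∃ π : Ω × Ω → ℝ, IsCoupling π μ ν ∧
      ∑ p : Ω × Ω, π p * dist p.1 p.2 = c} := by
  refine ⟨0, fun c hc => ?_⟩
  obtain ⟨π, hπ, rfl⟩ := hc
  exact Finset.sum_nonneg fun p _ => mul_nonneg (hπ.1 p) dist_nonneg

lemma wass_le_cost {μ ν : Ω → ℝ} (π : Ω × Ω → ℝ) (hπ : IsCoupling π μ ν) :
    Wass dist μ ν ≤ ∑ p : Ω × Ω, π p * dist p.1 p.2 :=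
  csInf_le (wass_bddBelow μ ν) ⟨π, hπ, rfl⟩

lemma prod_coupling {μ ν : Ω → ℝ} (hμ : IsDist μ) (hν : IsDist ν) :
    IsCoupling (fun p : Ω × Ω => μ p.1 * ν p.2) μ ν := by
  refine ⟨fun p => mul_nonneg (hμ.1 _) (hν.1 _), fun x => ?_, fun y => ?_⟩
  · simp [← Finset.mul_sum, hν.2]
  · simp [← Finset.sum_mul, hμ.2]

lemma exists_coupling_cost_lt {μ ν : Ω → ℝ} (hμ : IsDist μ) (hν : IsDist ν)
    {ε : ℝ} (hε : 0 < ε) :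
    ∃ π : Ω × Ω → ℝ, IsCoupling π μ ν ∧
      ∑ p : Ω × Ω, π p * dist p.1 p.2 < Wass dist μ ν + ε := by
  have hne : {c : ℝ | ∃ π : Ω × Ω → ℝ, IsCoupling π μ ν ∧
      ∑ p : Ω × Ω, π p * dist p.1 p.2 = c}.Nonempty :=
    ⟨_, ⟨_, prod_coupling hμ hν, rfl⟩⟩
  have h := exists_lt_of_csInf_lt hne (show sInf _ < Wass dist μ ν + ε from
    lt_add_of_pos_right _ hε)
  obtain ⟨c, ⟨π, hπ, rfl⟩, hlt⟩ := h
  exact ⟨π, hπ, hlt⟩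

lemma glue_coupling {a b c : Ω → ℝ} {α β : Ω × Ω → ℝ}
    (hα : IsCoupling α a b) (hβ : IsCoupling β b c) :
    ∃ γ : Ω × Ω → ℝ, IsCoupling γ a c ∧
      ∑ p : Ω × Ω, γ p * dist p.1 p.2 ≤
        ∑ p : Ω × Ω, α p * dist p.1 p.2 + ∑ p : Ω × Ω, β p * dist p.1 p.2 := by
  obtain ⟨hα0, hα1, hα2⟩ := hα
  obtain ⟨hβ0, hβ1, hβ2⟩ := hβ
  have hbnn : ∀ v, 0 ≤ b v := fun v =>
    (hα2 v) ▸ Finset.sum_nonneg fun u _ => hα0 (u, v)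
  have hαz : ∀ u v, ¬ 0 < b v → α (u, v) = 0 := by
    intro u v hv
    have hb0 : b v = 0 := le_antisymm (not_lt.1 hv) (hbnn v)
    exact (Finset.sum_eq_zero_iff_of_nonneg (fun u _ => hα0 (u, v))).1
      ((hα2 v).trans hb0) u (Finset.mem_univ u)
  have hβz : ∀ v w, ¬ 0 < b v → β (v, w) = 0 := by
    intro v w hv
    have hb0 : b v = 0 := le_antisymm (not_lt.1 hv) (hbnn v)
    exact (Finset.sum_eq_zero_iff_of_nonneg (fun w _ => hβ0 (v, w))).1
      ((hβ1 v).trans hb0) w (Finset.mem_univ w)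
  refine ⟨fun p => ∑ v, if 0 < b v then α (p.1, v) * β (v, p.2) / b v else 0,
    ⟨?_, ?_, ?_⟩, ?_⟩
  · intro p
    refine Finset.sum_nonneg fun v _ => ?_
    split
    · exact div_nonneg (mul_nonneg (hα0 _) (hβ0 _)) (hbnn v)
    · exact le_refl 0
  · intro u
    calc ∑ w, ∑ v, (if 0 < b v then α (u, v) * β (v, w) / b v else 0)
        = ∑ v, ∑ w, (if 0 < b v then α (u, v) * β (v, w) / b v else 0) := Finset.sum_comm
      _ = ∑ v, α (u, v) := by
          refine Finset.sum_congr rfl fun v _ => ?_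
          by_cases hv : 0 < b v
          · simp only [hv, if_true]
            rw [← Finset.sum_div, ← Finset.mul_sum, hβ1 v,
              mul_div_cancel_right₀ _ (ne_of_gt hv)]
          · simp [hv, hαz u v hv]
      _ = a u := hα1 u
  · intro w
    calc ∑ u, ∑ v, (if 0 < b v then α (u, v) * β (v, w) / b v else 0)
        = ∑ v, ∑ u, (if 0 < b v then α (u, v) * β (v, w) / b v else 0) := Finset.sum_comm
      _ = ∑ v, β (v, w) := by
          refine Finset.sum_congr rfl fun v _ => ?_
          by_cases hv : 0 < b v
          · simp only [hv, if_true, mul_div_assoc]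
            rw [← Finset.sum_mul, hα2 v]
            field_simp
          · simp [hv, hβz v w hv]
      _ = c w := hβ2 w
  · -- cost bound
    have expand : ∑ p : Ω × Ω,
        (∑ v, if 0 < b v then α (p.1, v) * β (v, p.2) / b v else 0) * dist p.1 p.2
        = ∑ v, ∑ u, ∑ w,
            (if 0 < b v then α (u, v) * β (v, w) / b v else 0) * dist u w := by
      rw [Fintype.sum_prod_type]
      simp only [Finset.sum_mul]
      calc ∑ u : Ω, ∑ w : Ω, ∑ v : Ω,
              (if 0 < b v then α (u, v) * β (v, w) / b v else 0) * dist u w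
          = ∑ u : Ω, ∑ v : Ω, ∑ w : Ω,
              (if 0 < b v then α (u, v) * β (v, w) / b v else 0) * dist u w :=
            Finset.sum_congr rfl fun u _ => Finset.sum_comm
        _ = ∑ v : Ω, ∑ u : Ω, ∑ w : Ω,
              (if 0 < b v then α (u, v) * β (v, w) / b v else 0) * dist u w :=
            Finset.sum_comm
    rw [expand]
    have costα : ∑ p : Ω × Ω, α p * dist p.1 p.2 = ∑ v, ∑ u, α (u, v) * dist u v := by
      rw [Fintype.sum_prod_type, Finset.sum_comm]
    have costβ : ∑ p : Ω × Ω, β p * dist p.1 p.2 = ∑ v, ∑ w, β (v, w) * dist v w := by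
      rw [Fintype.sum_prod_type]
    rw [costα, costβ, ← Finset.sum_add_distrib]
    refine Finset.sum_le_sum fun v _ => ?_
    by_cases hv : 0 < b v
    · have hb := ne_of_gt hv
      simp only [hv, if_true]
      calc ∑ u, ∑ w, α (u, v) * β (v, w) / b v * dist u w
          ≤ ∑ u, ∑ w, α (u, v) * β (v, w) / b v * (dist u v + dist v w) := by
            refine Finset.sum_le_sum fun u _ => Finset.sum_le_sum fun w _ => ?_
            exact mul_le_mul_of_nonneg_left (dist_triangle u v w)
              (div_nonneg (mul_nonneg (hα0 _) (hβ0 _)) hv.le)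
        _ = ∑ u, ∑ w, ((α (u, v) * dist u v) * (β (v, w) / b v)
              + (α (u, v) / b v) * (β (v, w) * dist v w)) := by
            refine Finset.sum_congr rfl fun u _ => Finset.sum_congr rfl fun w _ => ?_
            ring
        _ = (∑ u, α (u, v) * dist u v) + ∑ w, β (v, w) * dist v w := by
            simp only [Finset.sum_add_distrib]
            congr 1
            · rw [Finset.sum_congr rfl fun u _ => by
                rw [← Finset.mul_sum, ← Finset.sum_div, hβ1 v, div_self hb, mul_one]]
            · rw [Finset.sum_comm]
              exact Finset.sum_congr rfl fun w _ => by
                rw [← Finset.sum_mul, ← Finset.sum_div, hα2 v, div_self hb, one_mul]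
    · simp only [hv, if_false, zero_mul, Finset.sum_const_zero]
      exact add_nonneg (Finset.sum_nonneg fun u _ => mul_nonneg (hα0 _) dist_nonneg)
        (Finset.sum_nonneg fun w _ => mul_nonneg (hβ0 _) dist_nonneg)



lemma wass_triangle {a b c : Ω → ℝ} (ha : IsDist a) (hb : IsDist b) (hc : IsDist c) :
    Wass dist a c ≤ Wass dist a b + Wass dist b c := by
  refine le_of_forall_pos_le_add fun ε hε => ?_
  obtain ⟨α, hα, hαc⟩ := exists_coupling_cost_lt ha hb (half_pos hε)
  obtain ⟨β, hβ, hβc⟩ := exists_coupling_cost_lt hb hc (half_pos hε)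
  obtain ⟨γ, hγ, hγc⟩ := glue_coupling hα hβ
  have := wass_le_cost γ hγ
  linarith

end WassAux

/-- if `P` has `C`-disagreement with `Q` on the support of `μ` and `Q` is
`δ`-contractive, then `W_d(μ,ν) ≤ C/δ` for the stationary distributions `μ, ν`. -/
theorem wasserstein_le_of_contractive_coupling
    {Ω : Type} [Fintype Ω] [Nonempty Ω] [MetricSpace Ω]
    (C δ : ℝ) (hC : 0 < C) (hδ0 : 0 < δ) (hδ1 : δ < 1)
    (P Q : Ω → Ω → ℝ) (μ ν : Ω → ℝ)
    (hμ : IsDist μ) (hν : IsDist ν)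
    (hP : ∀ x : Ω, IsDist (P x)) (hQ : ∀ x : Ω, IsDist (Q x))
    (hμstat : ∀ y : Ω, ∑ x : Ω, μ x * P x y = μ y)
    (hνstat : ∀ y : Ω, ∑ x : Ω, ν x * Q x y = ν y)
    (hdis : ∀ x : Ω, 0 < μ x → Wass dist (P x) (Q x) ≤ C)
    (hcontr : ∀ x y : Ω, 0 < μ x → 0 < ν y →
      Wass dist (Q x) (Q y) ≤ (1 - δ) * dist x y) :
    Wass dist μ ν ≤ C / δ := by
  have key : ∀ ε : ℝ, 0 < ε →
      Wass dist μ ν ≤ C + (1 - δ) * (Wass dist μ ν + ε) + ε := by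
    intro ε hε
    obtain ⟨π, hπ, hπc⟩ := exists_coupling_cost_lt hμ hν hε
    have hκex : ∀ p : Ω × Ω, ∃ κ : Ω × Ω → ℝ, IsCoupling κ (P p.1) (Q p.2) ∧
        ∑ q : Ω × Ω, κ q * dist q.1 q.2 < Wass dist (P p.1) (Q p.2) + ε :=
      fun p => exists_coupling_cost_lt (hP p.1) (hQ p.2) hε
    choose κ hκc hκcost using hκex
    set ρ : Ω × Ω → ℝ := fun q => ∑ p : Ω × Ω, π p * κ p q with hρ
    have hρc : IsCoupling ρ μ ν := by
      refine ⟨fun q => Finset.sum_nonneg fun p _ =>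
        mul_nonneg (hπ.1 p) ((hκc p).1 q), ?_, ?_⟩
      · intro u
        simp only [hρ]
        calc ∑ w, ∑ p : Ω × Ω, π p * κ p (u, w)
            = ∑ p : Ω × Ω, ∑ w, π p * κ p (u, w) := Finset.sum_comm
          _ = ∑ p : Ω × Ω, π p * P p.1 u := by
              refine Finset.sum_congr rfl fun p _ => ?_
              rw [← Finset.mul_sum, (hκc p).2.1 u]
          _ = μ u := by
              rw [Fintype.sum_prod_type]
              refine (Finset.sum_congr rfl fun x _ => ?_).trans (hμstat u)
              dsimp only
              rw [← Finset.sum_mul, hπ.2.1 x]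
      · intro w
        simp only [hρ]
        calc ∑ u, ∑ p : Ω × Ω, π p * κ p (u, w)
            = ∑ p : Ω × Ω, ∑ u, π p * κ p (u, w) := Finset.sum_comm
          _ = ∑ p : Ω × Ω, π p * Q p.2 w := by
              refine Finset.sum_congr rfl fun p _ => ?_
              rw [← Finset.mul_sum, (hκc p).2.2 w]
          _ = ν w := by
              rw [Fintype.sum_prod_type, Finset.sum_comm]
              refine (Finset.sum_congr rfl fun y _ => ?_).trans (hνstat w)
              dsimp only
              rw [← Finset.sum_mul, hπ.2.2 y]
    have hcost : ∑ q : Ω × Ω, ρ q * dist q.1 q.2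
        = ∑ p : Ω × Ω, π p * ∑ q : Ω × Ω, κ p q * dist q.1 q.2 := by
      simp only [hρ, Finset.sum_mul]
      rw [Finset.sum_comm]
      refine Finset.sum_congr rfl fun p _ => ?_
      rw [Finset.mul_sum]
      exact Finset.sum_congr rfl fun q _ => mul_assoc _ _ _
    have hWxy : ∀ p : Ω × Ω, 0 < π p →
        Wass dist (P p.1) (Q p.2) ≤ C + (1 - δ) * dist p.1 p.2 := by
      intro p hp
      have hpeq : π (p.1, p.2) = π p := by rw [Prod.mk.eta]
      have hμx : 0 < μ p.1 := by
        have hle : π (p.1, p.2) ≤ μ p.1 := by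
          rw [← hπ.2.1 p.1]
          exact Finset.single_le_sum (fun y _ => hπ.1 (p.1, y)) (Finset.mem_univ p.2)
        rw [hpeq] at hle; linarith
      have hνy : 0 < ν p.2 := by
        have hle : π (p.1, p.2) ≤ ν p.2 := by
          rw [← hπ.2.2 p.2]
          exact Finset.single_le_sum (fun x _ => hπ.1 (x, p.2)) (Finset.mem_univ p.1)
        rw [hpeq] at hle; linarith
      calc Wass dist (P p.1) (Q p.2)
          ≤ Wass dist (P p.1) (Q p.1) + Wass dist (Q p.1) (Q p.2) :=
            wass_triangle (hP p.1) (hQ p.1) (hQ p.2)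
        _ ≤ C + (1 - δ) * dist p.1 p.2 :=
            add_le_add (hdis p.1 hμx) (hcontr p.1 p.2 hμx hνy)
    have hsum1 : ∑ p : Ω × Ω, π p = 1 := by
      rw [Fintype.sum_prod_type]
      simp only [hπ.2.1]
      exact hμ.2
    calc Wass dist μ ν ≤ ∑ q : Ω × Ω, ρ q * dist q.1 q.2 := wass_le_cost ρ hρc
      _ = ∑ p : Ω × Ω, π p * ∑ q : Ω × Ω, κ p q * dist q.1 q.2 := hcost
      _ ≤ ∑ p : Ω × Ω, π p * (C + (1 - δ) * dist p.1 p.2 + ε) := by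
          refine Finset.sum_le_sum fun p _ => ?_
          rcases eq_or_lt_of_le (hπ.1 p) with h0 | hp
          · rw [← h0, zero_mul, zero_mul]
          · refine mul_le_mul_of_nonneg_left ?_ (hπ.1 p)
            exact (hκcost p).le.trans (add_le_add_left (hWxy p hp) ε)
      _ = C + (1 - δ) * ∑ p : Ω × Ω, π p * dist p.1 p.2 + ε := by
          have hterm : ∀ p : Ω × Ω, π p * (C + (1 - δ) * dist p.1 p.2 + ε)
              = C * π p + (1 - δ) * (π p * dist p.1 p.2) + ε * π p :=
            fun p => by ring
          simp only [hterm]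
          rw [Finset.sum_add_distrib, Finset.sum_add_distrib, ← Finset.mul_sum,
            ← Finset.mul_sum, ← Finset.mul_sum, hsum1, mul_one, mul_one]
      _ ≤ C + (1 - δ) * (Wass dist μ ν + ε) + ε := by
          have h1δ : (0:ℝ) ≤ 1 - δ := by linarith
          have := mul_le_mul_of_nonneg_left hπc.le h1δ
          linarith
  have hδW : δ * Wass dist μ ν ≤ C := by
    refine le_of_forall_pos_le_add fun ε hε => ?_
    have h := key (ε / 2) (by linarith)
    nlinarith [h]
  rw [le_div_iff₀ hδ0]
  linarith
end
end
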